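/- Stieltjes' summation formulas: for a strictly double positive moment sequence, Σ_{k=0}^n l_k = Σ_{k=0}^n |P_k(0)|² = Δ_{2,n}/Δ_{0,n} and Σ_{k=0}^{n−1} ω_k = −Q_n(0)/P_n(0) = −Δ_{−1,n}/Δ_{1,n}, where Δ_{2,n} = det(s_{2+i+j})_{0≤i,j≤n−1} (Δ_{2,0} := 1) and Δ_{−1,n} is the Hankel-type determinant of size n+1 with top-left entry 0 and entries s_{i+j−1} for i+j ≥ 1 (Δ_{−1,0} := 0). -/

import Mathlib

open MeasureTheory

noncomputable section

/-- The Hankel determinant `Δ_{0,n} = det (s_{i+j})_{0 ≤ i,j ≤ n}`. -/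
def hankel (s : ℕ → ℝ) (n : ℕ) : ℝ :=
  (Matrix.of fun i j : Fin (n + 1) => s (i.1 + j.1)).det

/-- `Δ_{0,n-1}` with the convention `Δ_{0,-1} = 1`. -/
def hankelPrev (s : ℕ → ℝ) : ℕ → ℝ
  | 0 => 1
  | n + 1 => hankel s n

/-- `Δ_{1,n} = det (s_{1+i+j})_{0 ≤ i,j ≤ n−1}` (with `Δ_{1,0} = 1`). -/
def hankel1 (s : ℕ → ℝ) (n : ℕ) : ℝ :=
  (Matrix.of fun i j : Fin n => s (1 + i.1 + j.1)).det

/-- `Δ_{2,n} = det (s_{2+i+j})_{0 ≤ i,j ≤ n−1}` (with `Δ_{2,0} = 1`). -/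
def hankel2 (s : ℕ → ℝ) (n : ℕ) : ℝ :=
  (Matrix.of fun i j : Fin n => s (2 + i.1 + j.1)).det

/-- `Δ_{−1,n}`: the `(n+1)×(n+1)` Hankel-type determinant with top-left entry `0` and
entries `s_{i+j−1}` for `i+j ≥ 1` (so `Δ_{−1,0} = 0`). -/
def hankelm1 (s : ℕ → ℝ) (n : ℕ) : ℝ :=
  (Matrix.of fun i j : Fin (n + 1) =>
    if i.1 + j.1 = 0 then (0 : ℝ) else s (i.1 + j.1 - 1)).det

/-- `ρ` is a solution of the Hamburger moment problem with data `s`. -/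
def IsMomentSolution (s : ℕ → ℝ) (ρ : Measure ℝ) : Prop :=
  ∀ k : ℕ, Integrable (fun x : ℝ => x ^ k) ρ ∧ (∫ x, x ^ k ∂ρ) = s k

/-- The orthonormal polynomial of the first kind `P_n`, via the determinant formula. -/
def Pn (s : ℕ → ℝ) (n : ℕ) (z : ℝ) : ℝ :=
  (Real.sqrt (hankelPrev s n * hankel s n))⁻¹ *
    (Matrix.of fun i j : Fin (n + 1) =>
      if i.1 < n then s (i.1 + j.1) else z ^ j.1).det

/-- The polynomial of the second kind `Q_n(z) = ∫ (P_n(λ) − P_n(z))/(λ − z) dρ(λ)`. -/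
def Qn (s : ℕ → ℝ) (ρ : Measure ℝ) (n : ℕ) (z : ℝ) : ℝ :=
  ∫ t, (if t = z then deriv (Pn s n) z else (Pn s n t - Pn s n z) / (t - z)) ∂ρ

/-- The mass `ω_k = Q_k(0)/P_k(0) − Q_{k+1}(0)/P_{k+1}(0)`. -/
def omKS (s : ℕ → ℝ) (ρ : Measure ℝ) (k : ℕ) : ℝ :=
  Qn s ρ k 0 / Pn s k 0 - Qn s ρ (k + 1) 0 / Pn s (k + 1) 0

open Matrix

/-- Reindexing `Fin (n+2)`: interior indices `1..n` from `Fin n`, corners `0, n+1` from `Fin 2`. -/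
def cornerEquiv (n : ℕ) : Fin n ⊕ Fin 2 ≃ Fin (n + 2) :=
  finSumFinEquiv.trans (Fin.cycleRange ⟨n, by omega⟩)

/-- corner offsets -/
def cOff (n : ℕ) (k : Fin 2) : ℕ := if k.1 = 0 then 0 else n + 1

lemma cornerEquiv_val (n : ℕ) (x : Fin n ⊕ Fin 2) :
    (cornerEquiv n x).1 = Sum.elim (fun i : Fin n => i.1 + 1) (cOff n) x := by
  rcases x with i | k
  · have h1 : (finSumFinEquiv (Sum.inl i) : Fin (n + 2)) < ⟨n, by omega⟩ := by
      simp [Fin.lt_def, i.2]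
    simp only [cornerEquiv, Equiv.trans_apply, Sum.elim_inl]
    rw [Fin.coe_cycleRange_of_lt h1]
    simp
  · have h : Fin.natAdd n k = (⟨n + k.1, by omega⟩ : Fin (n + 2)) := rfl
    simp only [cornerEquiv, Equiv.trans_apply, finSumFinEquiv_apply_right, h]
    rcases (by omega : k.1 = 0 ∨ k.1 = 1) with h0 | h1
    · have h2 : (⟨n + k.1, by omega⟩ : Fin (n + 2)) = ⟨n, by omega⟩ := by
        simp [Fin.ext_iff, h0]
      rw [h2, Fin.cycleRange_self]
      simp [cOff, h0]
    · have hgt : (⟨n, by omega⟩ : Fin (n + 2)) < (⟨n + k.1, by omega⟩ : Fin (n + 2)) := by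
        show n < n + k.1; omega
      rw [Fin.cycleRange_of_gt hgt]
      simp [cOff, h1]


/-- Reindexing `Fin (n+1)` keeping corner `u`: for `u = 0` the corner index `0` comes from
`Fin 1` and interior `1..n` from `Fin n`; for `u = 1` interior `0..n-1`, corner `n`. -/
def cornerEquiv1 (n : ℕ) (u : Fin 2) : Fin n ⊕ Fin 1 ≃ Fin (n + 1) :=
  if u.1 = 0 then finSumFinEquiv.trans (Fin.cycleRange ⟨n, by omega⟩) else finSumFinEquiv

lemma cornerEquiv1_val (n : ℕ) (u : Fin 2) (x : Fin n ⊕ Fin 1) :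
    (cornerEquiv1 n u x).1 + u.1 = Sum.elim (fun i : Fin n => i.1 + 1) (fun _ => cOff n u) x := by
  have hu : u.1 = 0 ∨ u.1 = 1 := by omega
  rcases x with i | k
  · rcases hu with hu | hu
    · have h1 : (finSumFinEquiv (Sum.inl i) : Fin (n + 1)) < ⟨n, by omega⟩ := by
        simp [Fin.lt_def, i.2]
      simp only [cornerEquiv1, if_pos hu, Equiv.trans_apply, Sum.elim_inl]
      rw [Fin.coe_cycleRange_of_lt h1]
      simp [hu]
    · simp only [cornerEquiv1, hu, if_neg (by omega : ¬(1 = 0)), Sum.elim_inl,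
        finSumFinEquiv_apply_left]
      simp [hu]
  · rcases hu with hu | hu
    · have h : Fin.natAdd n k = (⟨n, by omega⟩ : Fin (n + 1)) := by
        exact Fin.ext (by simp)
      simp only [cornerEquiv1, if_pos hu, Equiv.trans_apply, finSumFinEquiv_apply_right, h,
        Fin.cycleRange_self, Sum.elim_inr]
      simp [cOff, hu]
    · simp only [cornerEquiv1, hu, if_neg (by omega : ¬(1 = 0)), Sum.elim_inr,
        finSumFinEquiv_apply_right]
      simp [cOff, hu, Fin.natAdd]

lemma desnanot_jacobi_hankel (s : ℕ → ℝ) (n : ℕ) (hA : hankel2 s n ≠ 0) :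
    hankel s (n + 1) * hankel2 s n =
      hankel2 s (n + 1) * hankel s n - (hankel1 s (n + 1)) ^ 2 := by
  classical
  set M : Matrix (Fin (n + 2)) (Fin (n + 2)) ℝ := Matrix.of fun i j => s (i.1 + j.1) with hM
  set e := cornerEquiv n with he
  set A : Matrix (Fin n) (Fin n) ℝ := Matrix.of fun i j : Fin n => s (2 + i.1 + j.1) with hA'
  set B : Matrix (Fin n) (Fin 2) ℝ := Matrix.of fun i k => s ((i.1 + 1) + cOff n k) with hB
  set C : Matrix (Fin 2) (Fin n) ℝ := Matrix.of fun k j => s (cOff n k + (j.1 + 1)) with hC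
  set D : Matrix (Fin 2) (Fin 2) ℝ := Matrix.of fun k l => s (cOff n k + cOff n l) with hD
  have hdetA : A.det ≠ 0 := hA
  haveI : Invertible A := A.invertibleOfIsUnitDet (isUnit_iff_ne_zero.mpr hdetA)
  set S : Matrix (Fin 2) (Fin 2) ℝ := D - C * ⅟A * B with hS
  have hsub : M.submatrix e e = fromBlocks A B C D := by
    ext i j
    rcases i with i | k <;> rcases j with j | l <;>
      simp only [submatrix_apply, hM, Matrix.of_apply, he, cornerEquiv_val, fromBlocks,
        Sum.elim_inl, Sum.elim_inr, hA', hB, hC, hD] <;> try (congr 1; omega)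
  have hbig : hankel s (n + 1) = A.det * S.det := by
    have h := Matrix.det_submatrix_equiv_self e M
    rw [hsub, Matrix.det_fromBlocks₁₁] at h
    exact h.symm
  have hminor : ∀ u v : Fin 2,
      A.det * S u v =
        ((Equiv.Perm.sign ((cornerEquiv1 n v).trans (cornerEquiv1 n u).symm) : ℤ) : ℝ) *
          (Matrix.of fun i j : Fin (n + 1) => s ((i.1 + u.1) + (j.1 + v.1))).det := by
    intro u v
    set b : Matrix (Fin n) (Fin 1) ℝ := Matrix.of fun i _ => B i v with hb
    set c : Matrix (Fin 1) (Fin n) ℝ := Matrix.of fun _ j => C u j with hc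
    set d : Matrix (Fin 1) (Fin 1) ℝ := Matrix.of fun _ _ => D u v with hd
    have hsub1 : (Matrix.of fun i j : Fin (n + 1) => s ((i.1 + u.1) + (j.1 + v.1))).submatrix
        (cornerEquiv1 n u) (cornerEquiv1 n v) = fromBlocks A b c d := by
      ext x y
      simp only [submatrix_apply, Matrix.of_apply]
      rw [cornerEquiv1_val n u x, cornerEquiv1_val n v y]
      rcases x with x | x <;> rcases y with y | y <;>
        simp only [fromBlocks, Sum.elim_inl, Sum.elim_inr, Matrix.of_apply,
          hA', hb, hc, hd, hB, hC, hD] <;> (try congr 1) <;> omega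
    have hdet1 : det (fromBlocks A b c d) = A.det * S u v := by
      rw [det_fromBlocks₁₁]
      congr 1
      rw [Matrix.det_fin_one]
      simp only [Matrix.sub_apply, hd, Matrix.of_apply, hS, Matrix.mul_apply, hb, hc]
    have hperm : (Matrix.of fun i j : Fin (n + 1) => s ((i.1 + u.1) + (j.1 + v.1))).submatrix
        (cornerEquiv1 n u) (cornerEquiv1 n v) =
        ((Matrix.of fun i j : Fin (n + 1) => s ((i.1 + u.1) + (j.1 + v.1))).submatrix
          (cornerEquiv1 n u) (cornerEquiv1 n u)).submatrix id
          ((cornerEquiv1 n v).trans (cornerEquiv1 n u).symm) := by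
      ext x y
      simp [Matrix.submatrix_apply]
    rw [← hdet1, ← hsub1, hperm, det_permute', det_submatrix_equiv_self]
  have e00 : ((Equiv.Perm.sign ((cornerEquiv1 n 0).trans (cornerEquiv1 n 0).symm) : ℤ) : ℝ) = 1 := by
    rw [Equiv.self_trans_symm]
    simp
  have e11 : ((Equiv.Perm.sign ((cornerEquiv1 n 1).trans (cornerEquiv1 n 1).symm) : ℤ) : ℝ) = 1 := by
    rw [Equiv.self_trans_symm]
    simp
  have eprod : ((Equiv.Perm.sign ((cornerEquiv1 n 1).trans (cornerEquiv1 n 0).symm) : ℤ) : ℝ) *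
      ((Equiv.Perm.sign ((cornerEquiv1 n 0).trans (cornerEquiv1 n 1).symm) : ℤ) : ℝ) = 1 := by
    have hsymm : (cornerEquiv1 n 0).trans (cornerEquiv1 n 1).symm =
        ((cornerEquiv1 n 1).trans (cornerEquiv1 n 0).symm)⁻¹ := by
      ext x
      simp [Equiv.Perm.inv_def]
    rw [hsymm, Equiv.Perm.sign_inv]
    rcases Int.units_eq_one_or (Equiv.Perm.sign ((cornerEquiv1 n 1).trans (cornerEquiv1 n 0).symm))
      with h | h <;> rw [h] <;> norm_num
  have hN00 : (Matrix.of fun i j : Fin (n + 1) =>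
      s ((i.1 + (0 : Fin 2).1) + (j.1 + (0 : Fin 2).1))).det = hankel s n := by
    unfold hankel
    congr 1
  have hN11 : (Matrix.of fun i j : Fin (n + 1) =>
      s ((i.1 + (1 : Fin 2).1) + (j.1 + (1 : Fin 2).1))).det = hankel2 s (n + 1) := by
    unfold hankel2
    congr 1
    ext i j
    simp only [Matrix.of_apply]
    congr 1
    omega
  have hN01 : (Matrix.of fun i j : Fin (n + 1) =>
      s ((i.1 + (0 : Fin 2).1) + (j.1 + (1 : Fin 2).1))).det = hankel1 s (n + 1) := by
    unfold hankel1
    congr 1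
    ext i j
    simp only [Matrix.of_apply]
    congr 1
    omega
  have hN10 : (Matrix.of fun i j : Fin (n + 1) =>
      s ((i.1 + (1 : Fin 2).1) + (j.1 + (0 : Fin 2).1))).det = hankel1 s (n + 1) := by
    unfold hankel1
    congr 1
    ext i j
    simp only [Matrix.of_apply]
    congr 1
    omega
  have m00 := hminor 0 0
  rw [e00, one_mul, hN00] at m00
  have m11 := hminor 1 1
  rw [e11, one_mul, hN11] at m11
  have m01 := hminor 0 1
  rw [hN01] at m01
  have m10 := hminor 1 0
  rw [hN10] at m10
  have hsq : (A.det * S 0 1) * (A.det * S 1 0) = hankel1 s (n + 1) ^ 2 := by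
    rw [m01, m10]
    linear_combination (hankel1 s (n + 1)) ^ 2 * eprod
  have h2n : hankel2 s n = A.det := by rw [hA']; rfl
  have hdS : S.det = S 0 0 * S 1 1 - S 0 1 * S 1 0 := Matrix.det_fin_two S
  rw [hbig, h2n, hdS, ← m00, ← m11, ← hsq]
  ring

def hmat (s : ℕ → ℝ) (n : ℕ) : Matrix (Fin (n + 1)) (Fin (n + 1)) ℝ :=
  Matrix.of fun i j => s (i.1 + j.1)

/-- Cofactor (unsigned minor) of the last row of the Hankel matrix. -/
def cofn (s : ℕ → ℝ) (n : ℕ) (j : ℕ) : ℝ :=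
  if h : j < n + 1 then
    ((hmat s n).submatrix (Fin.last n).succAbove (⟨j, h⟩ : Fin (n + 1)).succAbove).det
  else 0

lemma rowdet (s : ℕ → ℝ) (n : ℕ) (r : Fin (n + 1) → ℝ) :
    (Matrix.of fun i j : Fin (n + 1) => if i.1 < n then s (i.1 + j.1) else r j).det =
      ∑ j : Fin (n + 1), (-1) ^ (n + j.1) * r j * cofn s n j.1 := by
  rw [Matrix.det_succ_row _ (Fin.last n)]
  refine Finset.sum_congr rfl fun j _ => ?_
  have h1 : (Matrix.of fun i j : Fin (n + 1) =>
      if i.1 < n then s (i.1 + j.1) else r j) (Fin.last n) j = r j := by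
    simp
  have h2 : ((Matrix.of fun i j : Fin (n + 1) => if i.1 < n then s (i.1 + j.1) else r j).submatrix
      (Fin.last n).succAbove j.succAbove) =
      (hmat s n).submatrix (Fin.last n).succAbove j.succAbove := by
    ext k l
    simp only [Matrix.submatrix_apply, Fin.succAbove_last, Matrix.of_apply, hmat]
    rw [if_pos (by simpa using k.2)]
  have h3 : cofn s n j.1 =
      ((hmat s n).submatrix (Fin.last n).succAbove j.succAbove).det := by
    unfold cofn
    rw [dif_pos j.2]
  rw [h1, h2, Fin.val_last, ← h3]

lemma Pn_poly (s : ℕ → ℝ) (n : ℕ) (z : ℝ) :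
    Pn s n z = ∑ j ∈ Finset.range (n + 1),
      ((Real.sqrt (hankelPrev s n * hankel s n))⁻¹ * ((-1) ^ (n + j) * cofn s n j)) * z ^ j := by
  unfold Pn
  rw [rowdet s n (fun j => z ^ j.1), Finset.mul_sum,
    ← Fin.sum_univ_eq_sum_range (fun j =>
      ((Real.sqrt (hankelPrev s n * hankel s n))⁻¹ * ((-1) ^ (n + j) * cofn s n j)) * z ^ j) (n + 1)]
  exact Finset.sum_congr rfl fun j _ => by ring

lemma cof_zero (s : ℕ → ℝ) (n : ℕ) : cofn s n 0 = hankel1 s n := by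
  unfold cofn
  rw [dif_pos (by omega : 0 < n + 1)]
  unfold hankel1 hmat
  congr 1
  ext k l
  simp only [Matrix.submatrix_apply, Fin.succAbove_last, Matrix.of_apply]
  congr 1
  have : (⟨0, by omega⟩ : Fin (n + 1)).succAbove l = l.succ := by
    rw [show (⟨0, by omega⟩ : Fin (n + 1)) = 0 from rfl, Fin.succAbove_zero]
  rw [this]
  simp
  omega

lemma Pn_zero (s : ℕ → ℝ) (n : ℕ) :
    Pn s n 0 = (Real.sqrt (hankelPrev s n * hankel s n))⁻¹ * ((-1) ^ n * hankel1 s n) := by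
  rw [Pn_poly s n 0, Finset.sum_eq_single 0]
  · simp [cof_zero]
  · intro j _ hj
    simp [zero_pow hj]
  · intro h
    simp at h

lemma qdet (s : ℕ → ℝ) (n : ℕ) :
    (Matrix.of fun i j : Fin (n + 1) =>
        if i.1 < n then s (i.1 + j.1) else (if j.1 = 0 then (0:ℝ) else s (j.1 - 1))).det =
      (-1) ^ n * hankelm1 s n := by
  set Mq : Matrix (Fin (n + 1)) (Fin (n + 1)) ℝ := Matrix.of fun i j =>
    if i.1 < n then s (i.1 + j.1) else (if j.1 = 0 then (0:ℝ) else s (j.1 - 1)) with hMq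
  set Hm : Matrix (Fin (n + 1)) (Fin (n + 1)) ℝ := Matrix.of fun i j =>
    if i.1 + j.1 = 0 then (0 : ℝ) else s (i.1 + j.1 - 1) with hHm
  have key : Mq = Hm.submatrix (finRotate (n + 1)) id := by
    ext i j
    by_cases hi : i.1 < n
    · have hlt : i < Fin.last n := by simp [Fin.lt_def, hi]
      have hval : ((finRotate (n + 1)) i).1 = i.1 + 1 := by
        rw [finRotate_succ_apply, Fin.val_add_one_of_lt hlt]
      simp only [hMq, hHm, Matrix.submatrix_apply, Matrix.of_apply, id_eq, hval, if_pos hi]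
      rw [if_neg (by omega)]
      congr 1
      omega
    · have hi' : i = Fin.last n := by
        have := i.2; exact Fin.ext (by simp; omega)
      have hval : ((finRotate (n + 1)) i).1 = 0 := by
        rw [hi', finRotate_succ_apply, Fin.last_add_one]
        rfl
      simp only [hMq, hHm, Matrix.submatrix_apply, Matrix.of_apply, id_eq, hval, if_neg hi]
      by_cases hj : j.1 = 0
      · rw [if_pos hj, if_pos (by omega)]
      · rw [if_neg hj, if_neg (by omega)]
        congr 1
        omega
  rw [key, Matrix.det_permute, sign_finRotate]
  unfold hankelm1
  rw [← hHm]
  push_cast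
  ring

lemma Qn_zero (s : ℕ → ℝ) (ρ : Measure ℝ) (hρ : IsMomentSolution s ρ) (n : ℕ) :
    Qn s ρ n 0 =
      (Real.sqrt (hankelPrev s n * hankel s n))⁻¹ * ((-1) ^ n * hankelm1 s n) := by
  set c : ℝ := (Real.sqrt (hankelPrev s n * hankel s n))⁻¹ with hc
  set a : ℕ → ℝ := fun j => c * ((-1) ^ (n + j) * cofn s n j) with ha
  have hP : ∀ z, Pn s n z = ∑ j ∈ Finset.range (n + 1), a j * z ^ j := fun z => Pn_poly s n z
  have hint : ∀ t : ℝ,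
      (if t = (0:ℝ) then deriv (Pn s n) 0 else (Pn s n t - Pn s n 0) / (t - 0)) =
        ∑ j ∈ Finset.range n, a (j + 1) * t ^ j := by
    intro t
    by_cases ht : t = 0
    · rw [if_pos ht, ht]
      have hd : HasDerivAt (Pn s n)
          (∑ j ∈ Finset.range (n + 1), a j * (j * (0:ℝ) ^ (j - 1))) 0 := by
        have hfun : Pn s n = fun z => ∑ j ∈ Finset.range (n + 1), a j * z ^ j := funext hP
        rw [hfun]
        exact HasDerivAt.fun_sum fun j _ => (hasDerivAt_pow j 0).const_mul (a j)
      rw [hd.deriv]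
      have l1 : ∀ j ∈ Finset.range (n + 1),
          a j * (j * (0:ℝ) ^ (j - 1)) = if j = 1 then a 1 else 0 := by
        intro j _
        rcases j with _ | j
        · simp
        · rcases j with _ | j
          · simp
          · simp [zero_pow]
      have r1 : ∀ j ∈ Finset.range n,
          a (j + 1) * (0:ℝ) ^ j = if j = 0 then a 1 else 0 := by
        intro j _
        rcases j with _ | j <;> simp [zero_pow]
      rw [Finset.sum_congr rfl l1, Finset.sum_congr rfl r1,
        Finset.sum_ite_eq' (Finset.range (n + 1)) 1 (fun _ => a 1),
        Finset.sum_ite_eq' (Finset.range n) 0 (fun _ => a 1)]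
      by_cases hn : 0 < n
      · rw [if_pos (by simp; omega), if_pos (by simp [hn])]
      · rw [if_neg (by simp; omega), if_neg (by simp; omega)]
    · rw [if_neg ht, sub_zero, hP t, hP 0]
      have hz : (∑ j ∈ Finset.range (n + 1), a j * (0:ℝ) ^ j) = a 0 := by
        rw [Finset.sum_range_succ' (fun j => a j * (0:ℝ) ^ j) n]
        simp [zero_pow]
      rw [hz, Finset.sum_range_succ' (fun j => a j * t ^ j) n]
      have hfac : (∑ j ∈ Finset.range n, a (j + 1) * t ^ (j + 1)) + a 0 * t ^ 0 - a 0 =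
          t * ∑ j ∈ Finset.range n, a (j + 1) * t ^ j := by
        rw [Finset.mul_sum]
        simp only [pow_zero, mul_one, add_sub_cancel_right]
        exact Finset.sum_congr rfl fun j _ => by ring
      rw [hfac, mul_div_cancel_left₀ _ ht]
  unfold Qn
  have hfun2 : (fun t : ℝ => if t = (0:ℝ) then deriv (Pn s n) 0
      else (Pn s n t - Pn s n 0) / (t - 0)) =
      fun t => ∑ j ∈ Finset.range n, a (j + 1) * t ^ j := funext hint
  rw [hfun2, MeasureTheory.integral_finset_sum _
    (fun j _ => ((hρ j).1.const_mul (a (j + 1))))]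
  have hval : ∀ j ∈ Finset.range n, (∫ t, a (j + 1) * t ^ j ∂ρ) = a (j + 1) * s j := by
    intro j _
    rw [MeasureTheory.integral_const_mul, (hρ j).2]
  rw [Finset.sum_congr rfl hval]
  -- identify with the determinant
  have hq := rowdet s n (fun j => if j.1 = 0 then (0:ℝ) else s (j.1 - 1))
  rw [qdet s n] at hq
  rw [Fin.sum_univ_eq_sum_range
    (fun j => (-1) ^ (n + j) * (if j = 0 then (0:ℝ) else s (j - 1)) * cofn s n j) (n + 1)] at hq
  rw [Finset.sum_range_succ'
    (fun j => (-1) ^ (n + j) * (if j = 0 then (0:ℝ) else s (j - 1)) * cofn s n j) n] at hq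
  simp only [if_pos rfl, ite_true, eq_self_iff_true, mul_zero, zero_mul, add_zero,
    Nat.add_sub_cancel] at hq
  calc (∑ j ∈ Finset.range n, a (j + 1) * s j)
      = c * ∑ j ∈ Finset.range n, (-1) ^ (n + (j + 1)) * s j * cofn s n (j + 1) := by
        rw [Finset.mul_sum]
        exact Finset.sum_congr rfl fun j _ => by rw [ha]; ring
    _ = c * ((-1) ^ n * hankelm1 s n) := by
        rw [hq]
        refine congrArg (fun x => c * x) (Finset.sum_congr rfl fun j _ => ?_)
        rw [if_neg (Nat.succ_ne_zero j)]

/-- Stieltjes' summation formulas: `Σ_{k=0}^n l_k = Σ_{k=0}^n |P_k(0)|² = Δ_{2,n}/Δ_{0,n}`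
and `Σ_{k=0}^{n−1} ω_k = −Q_n(0)/P_n(0) = −Δ_{−1,n}/Δ_{1,n}`. -/
theorem stieltjes_summation_formulas (s : ℕ → ℝ) (ρ : Measure ℝ)
    [IsProbabilityMeasure ρ] (hρ : IsMomentSolution s ρ)
    (h0 : ∀ n, 0 < hankel s n) (h1 : ∀ n, 0 < hankel1 s n) :
    ∀ n : ℕ,
      (∑ k ∈ Finset.range (n + 1), (Pn s k 0) ^ 2) = hankel2 s n / hankel s n ∧
      (∑ k ∈ Finset.range n, omKS s ρ k) = -(Qn s ρ n 0) / Pn s n 0 ∧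
      -(Qn s ρ n 0) / Pn s n 0 = -(hankelm1 s n) / hankel1 s n := by
  have hprod : ∀ n, 0 < hankelPrev s n * hankel s n := by
    intro n
    cases n with
    | zero => simpa [hankelPrev] using h0 0
    | succ m => exact mul_pos (h0 m) (h0 (m + 1))
  have hcne : ∀ n, (Real.sqrt (hankelPrev s n * hankel s n))⁻¹ ≠ 0 := fun n =>
    inv_ne_zero (ne_of_gt (Real.sqrt_pos.mpr (hprod n)))
  have hPsq : ∀ n, (Pn s n 0) ^ 2 = (hankel1 s n) ^ 2 / (hankelPrev s n * hankel s n) := by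
    intro n
    have hsg : ((-1 : ℝ) ^ n) ^ 2 = 1 := by
      rw [← pow_mul, mul_comm, pow_mul]
      norm_num
    rw [Pn_zero, mul_pow, mul_pow, hsg, one_mul, inv_pow, Real.sq_sqrt (hprod n).le,
      inv_mul_eq_div]
  have h10 : hankel1 s 0 = 1 := Matrix.det_fin_zero
  have part1 : ∀ n, (∑ k ∈ Finset.range (n + 1), (Pn s k 0) ^ 2) = hankel2 s n / hankel s n ∧
      0 < hankel2 s n := by
    intro n
    induction n with
    | zero =>
      constructor
      · rw [Finset.sum_range_one, hPsq 0, h10]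
        have e2 : hankel2 s 0 = 1 := Matrix.det_fin_zero
        have e3 : hankelPrev s 0 = 1 := rfl
        rw [e2, e3, one_pow, one_mul]
      · have e2 : hankel2 s 0 = 1 := Matrix.det_fin_zero
        rw [e2]
        norm_num
    | succ m ih =>
      obtain ⟨ihs, ihpos⟩ := ih
      have hDJ := desnanot_jacobi_hankel s m (ne_of_gt ihpos)
      have hne1 : hankel s m ≠ 0 := ne_of_gt (h0 m)
      have hne2 : hankel s (m + 1) ≠ 0 := ne_of_gt (h0 (m + 1))
      have hsum : (∑ k ∈ Finset.range (m + 2), (Pn s k 0) ^ 2) =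
          hankel2 s (m + 1) / hankel s (m + 1) := by
        rw [Finset.sum_range_succ, ihs, hPsq (m + 1),
          show hankelPrev s (m + 1) = hankel s m from rfl]
        field_simp
        linear_combination hDJ
      refine ⟨hsum, ?_⟩
      have hpos : 0 < ∑ k ∈ Finset.range (m + 2), (Pn s k 0) ^ 2 := by
        refine Finset.sum_pos' (fun i _ => sq_nonneg _) ⟨0, by simp, ?_⟩
        rw [hPsq 0, h10, one_pow]
        exact div_pos one_pos (hprod 0)
      have hrw : hankel2 s (m + 1) =
          (hankel2 s (m + 1) / hankel s (m + 1)) * hankel s (m + 1) :=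
        (div_mul_cancel₀ _ hne2).symm
      rw [hrw]
      exact mul_pos (hsum ▸ hpos) (h0 (m + 1))
  intro n
  refine ⟨(part1 n).1, ?_, ?_⟩
  · have h00 : Qn s ρ 0 0 = 0 := by
      have hconst : ∀ z : ℝ, Pn s 0 z = (Real.sqrt (hankelPrev s 0 * hankel s 0))⁻¹ := by
        intro z
        rw [Pn_poly s 0 z, Finset.sum_range_one, cof_zero s 0, h10]
        simp
      unfold Qn
      have hzero : (fun t : ℝ => if t = 0 then deriv (Pn s 0) 0
          else (Pn s 0 t - Pn s 0 0) / (t - 0)) = fun _ => 0 := by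
        funext t
        by_cases ht' : t = 0
        · rw [if_pos ht']
          rw [show Pn s 0 = fun _ : ℝ => (Real.sqrt (hankelPrev s 0 * hankel s 0))⁻¹ from
            funext hconst]
          exact deriv_const _ _
        · rw [if_neg ht', hconst t, hconst 0, sub_self, zero_div]
      rw [hzero, integral_zero]
    have ht := Finset.sum_range_sub' (fun k => Qn s ρ k 0 / Pn s k 0) n
    rw [show (∑ k ∈ Finset.range n, omKS s ρ k) = ∑ k ∈ Finset.range n,
      ((fun k => Qn s ρ k 0 / Pn s k 0) k - (fun k => Qn s ρ k 0 / Pn s k 0) (k + 1)) from rfl,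
      ht, h00, zero_div, zero_sub, neg_div]
  · rw [Qn_zero s ρ hρ n, Pn_zero s n, neg_div, neg_div]
    congr 1
    rw [mul_div_mul_left _ _ (hcne n),
      mul_div_mul_left _ _ (pow_ne_zero n (by norm_num : (-1 : ℝ) ≠ 0))]
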